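/- Let A ∈ ℂ^{N×N} be invertible, v ∈ ℂᴺ nonzero, and φ(z) = Az + b an affine map with fixed point z₀. If lim_{k→∞} k! ∏_{i=0}^{k-1} ‖Aⁱv‖ < +∞ (the sequence is bounded), then the operator C_φ ∘ D_v on H(ℂᴺ) is not hypercyclic. -/

import Mathlib

set_option maxHeartbeats 1000000

open Metric Complex intervalIntegral Set MeasureTheory Finset

variable {N : ℕ}

theorem sliceDeriv (f : (Fin N → ℂ) → ℂ) (hf : Differentiable ℂ f) (x v : Fin N → ℂ) :
    HasDerivAt (fun τ : ℂ => f (x + τ • v)) (fderiv ℂ f x v) 0 := by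
  have h1 : HasDerivAt (fun τ : ℂ => x + τ • v) v 0 := by
    simpa using ((hasDerivAt_id (0:ℂ)).smul_const v).const_add x
  have h2 := (hf (x + (0:ℂ) • v)).hasFDerivAt.comp_hasDerivAt 0 h1
  simpa [Function.comp_def] using h2

theorem sliceDiff (f : (Fin N → ℂ) → ℂ) (hf : Differentiable ℂ f) (x v : Fin N → ℂ) :
    Differentiable ℂ (fun τ : ℂ => f (x + τ • v)) := by
  intro τ
  have h1 : HasDerivAt (fun τ : ℂ => x + τ • v) v τ := by
    simpa using ((hasDerivAt_id (τ:ℂ)).smul_const v).const_add x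
  exact ((hf _).hasFDerivAt.comp_hasDerivAt τ h1).differentiableAt

theorem sliceCauchy (f : (Fin N → ℂ) → ℂ) (hf : Differentiable ℂ f) (x v : Fin N → ℂ) {s M : ℝ}
    (hs : 0 < s) (hM : ∀ τ : ℂ, ‖τ‖ = s → ‖f (x + τ • v)‖ ≤ M) :
    ‖fderiv ℂ f x v‖ ≤ M / s := by
  have key : ‖deriv (fun τ : ℂ => f (x + τ • v)) 0‖ ≤ M / s := by
    apply Complex.norm_deriv_le_of_forall_mem_sphere_norm_le (c := 0) hs (sliceDiff f hf x v).diffContOnCl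
    intro z hz
    have hz' : ‖z‖ = s := by simpa using hz
    exact hM z hz'
  rwa [(sliceDeriv f hf x v).deriv] at key


variable {N : ℕ}

theorem opnormBound (f : (Fin N → ℂ) → ℂ) (hf : Differentiable ℂ f) (x : Fin N → ℂ) {M : ℝ}
    (hM : ∀ y ∈ closedBall x 1, ‖f y‖ ≤ M) : ‖fderiv ℂ f x‖ ≤ M := by
  have hM0 : 0 ≤ M := le_trans (norm_nonneg _) (hM x (mem_closedBall_self zero_le_one))
  apply ContinuousLinearMap.opNorm_le_bound _ hM0
  intro w
  rcases eq_or_ne w 0 with rfl | hw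
  · simp
  · have hnw : (0:ℝ) < ‖w‖ := norm_pos_iff.2 hw
    have hs : (0:ℝ) < 1 / ‖w‖ := by positivity
    have key := sliceCauchy f hf x w hs (M := M) ?_
    · calc ‖fderiv ℂ f x w‖ ≤ M / (1 / ‖w‖) := key
        _ = M * ‖w‖ := by field_simp
    · intro τ hτ
      apply hM
      simp only [mem_closedBall, dist_self_add_left]
      rw [norm_smul, hτ]
      field_simp
      norm_num



-- representation of the directional derivative as an integral
theorem reprDv (f : (Fin N → ℂ) → ℂ) (hf : Differentiable ℂ f) (v x : Fin N → ℂ) :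
    fderiv ℂ f x v = (2 * Real.pi * I : ℂ)⁻¹ • ∫ t in (0:ℝ)..(2 * Real.pi),
      deriv (circleMap 0 1) t • ((circleMap 0 1 t) ^ (-2:ℤ) • f (x + circleMap 0 1 t • v)) := by
  have h1 : deriv (fun τ : ℂ => f (x + τ • v)) 0
      = (2 * Real.pi * I : ℂ)⁻¹ • ∮ z in C(0, 1), (z - 0) ^ (-2:ℤ) • f (x + z • v) :=
    by
      have h := (sliceDiff f hf x v).diffContOnCl.deriv_eq_smul_circleIntegral (c := 0) one_pos
      have hne : (2 * Real.pi * I : ℂ) ≠ 0 := by simp [Real.pi_ne_zero, I_ne_zero]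
      rw [eq_inv_smul_iff₀ hne, ← h]
      simp [zpow_neg, one_div]
  have h2 : deriv (fun τ : ℂ => f (x + τ • v)) 0 = fderiv ℂ f x v := (sliceDeriv f hf x v).deriv
  rw [← h2, h1]
  simp only [circleIntegral, sub_zero]

theorem Dv_entire (f : (Fin N → ℂ) → ℂ) (hf : Differentiable ℂ f) (v : Fin N → ℂ) :
    Differentiable ℂ (fun x => fderiv ℂ f x v) := by
  intro x₀
  -- bound on f near x₀
  obtain ⟨M, hM⟩ := (isCompact_closedBall x₀ (2 + ‖v‖)).exists_bound_of_continuousOn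
    hf.continuous.continuousOn
  -- the parametric integral
  set w : ℝ → ℂ := circleMap 0 1 with hw
  have hw1 : ∀ t, ‖w t‖ = 1 := fun t => by
    simp [hw, norm_circleMap_zero]
  have hwne : ∀ t, w t ≠ 0 := fun t hzero => by
    have := hw1 t; rw [hzero] at this; simp at this
  set c : ℝ → ℂ := fun t => deriv (circleMap 0 1) t with hc
  have hcont_c : Continuous c := by
    simp only [hc, deriv_circleMap]; exact (continuous_circleMap 0 1).mul continuous_const
  have hc1 : ∀ t, ‖c t‖ ≤ 1 := fun t => by
    simp [hc, deriv_circleMap, map_mul, norm_circleMap_zero]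
  set d : ℝ → ℂ := fun t => (w t) ^ (-2:ℤ) with hd
  have hcont_d : Continuous d := by
    apply (continuous_circleMap 0 1).zpow₀
    intro t; exact Or.inl (hwne t)
  have hd1 : ∀ t, ‖d t‖ ≤ 1 := fun t => by
    simp only [hd, norm_zpow]
    rw [hw1 t]; simp
  set F : (Fin N → ℂ) → ℝ → ℂ := fun x t => c t • (d t • f (x + w t • v)) with hF
  set F' : (Fin N → ℂ) → ℝ → (Fin N → ℂ) →L[ℂ] ℂ :=
    fun x t => c t • (d t • (fderiv ℂ f (x + w t • v))) with hF'
  have hbase : ∀ (x : Fin N → ℂ) (t : ℝ),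
      HasFDerivAt (fun y => f (y + w t • v)) (fderiv ℂ f (x + w t • v)) x := by
    intro x t
    have h0 : HasFDerivAt (fun y : Fin N → ℂ => y + w t • v)
        (ContinuousLinearMap.id ℂ (Fin N → ℂ)) x := (hasFDerivAt_id x).add_const _
    have := (hf (x + w t • v)).hasFDerivAt.comp x h0
    simpa [Function.comp_def] using this
  have hdiff : ∀ (t : ℝ) (x : Fin N → ℂ), HasFDerivAt (fun y => F y t) (F' x t) x := by
    intro t x
    exact ((hbase x t).const_smul (d t)).const_smul (c t)
  -- measurability of F x
  have hFmeas : ∀ x : Fin N → ℂ, Continuous (F x) := by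
    intro x
    apply hcont_c.smul (hcont_d.smul _)
    exact hf.continuous.comp (continuous_const.add ((continuous_circleMap 0 1).smul continuous_const))
  have hF'meas : AEStronglyMeasurable (F' x₀)
      (MeasureTheory.volume.restrict (Set.uIoc (0:ℝ) (2 * Real.pi))) := by
    have h1 : Measurable fun t => fderiv ℂ f (x₀ + w t • v) :=
      (measurable_fderiv ℂ f).comp
        (continuous_const.add ((continuous_circleMap 0 1).smul continuous_const)).measurable
    exact (hcont_c.aestronglyMeasurable.smul
      (hcont_d.aestronglyMeasurable.smul h1.aestronglyMeasurable))
  have hM0 : 0 ≤ M := le_trans (norm_nonneg _) (hM x₀ (mem_closedBall_self (by positivity)))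
  have hbound : ∀ t : ℝ, ∀ x ∈ ball x₀ 1, ‖F' x t‖ ≤ M := by
    intro t x hx
    have hfd : ‖fderiv ℂ f (x + w t • v)‖ ≤ M := by
      apply opnormBound f hf
      intro y hy
      apply hM
      have : dist y x₀ ≤ 2 + ‖v‖ := by
        calc dist y x₀ ≤ dist y (x + w t • v) + dist (x + w t • v) x + dist x x₀ :=
          dist_triangle4 y (x + w t • v) x x₀
        _ ≤ 1 + ‖v‖ + 1 := by
            gcongr
            · exact mem_closedBall.1 hy
            · simp only [dist_self_add_left]
              rw [norm_smul, hw1 t, one_mul]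
            · exact le_of_lt (mem_ball.1 hx)
        _ = 2 + ‖v‖ := by ring
      exact mem_closedBall.2 this
    simp only [hF']
    calc ‖c t • (d t • (fderiv ℂ f (x + w t • v)))‖ ≤ ‖c t‖ * ‖d t • (fderiv ℂ f (x + w t • v))‖ := (norm_smul _ _).le
      _ ≤ ‖c t‖ * (‖d t‖ * ‖fderiv ℂ f (x + w t • v)‖) := by
          gcongr; exact (norm_smul _ _).le
      _ ≤ 1 * (1 * M) := by
          gcongr
          all_goals first | exact norm_nonneg _ | exact hc1 t | exact hd1 t | exact hfd | positivity
      _ = M := by ring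
  have main := intervalIntegral.hasFDerivAt_integral_of_dominated_of_fderiv_le
    (𝕜 := ℂ) (μ := MeasureTheory.volume) (F := F) (F' := F') (x₀ := x₀)
    (a := 0) (b := 2 * Real.pi) (bound := fun _ => M) (ball_mem_nhds x₀ one_pos)
    (Filter.Eventually.of_forall fun x => (hFmeas x).aestronglyMeasurable)
    ((hFmeas x₀).intervalIntegrable _ _)
    hF'meas
    (Filter.Eventually.of_forall fun t _ x hx => hbound t x hx)
    (intervalIntegrable_const)
    (Filter.Eventually.of_forall fun t _ x _ => hdiff t x)
  have : DifferentiableAt ℂ (fun x => ∫ t in (0:ℝ)..(2 * Real.pi), F x t) x₀ :=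
    main.differentiableAt
  have heq : (fun x => fderiv ℂ f x v)
      = fun x => (2 * Real.pi * I : ℂ)⁻¹ • ∫ t in (0:ℝ)..(2 * Real.pi), F x t := by
    funext x
    exact reprDv f hf v x
  rw [heq]
  exact this.const_smul ((2 * Real.pi * I : ℂ)⁻¹)

theorem powSelfLe (n : ℕ) : (n:ℝ)^n ≤ Real.exp 1 ^ n * n.factorial := by
  induction n with
  | zero => simp
  | succ n ih =>
    have he1 : (1:ℝ) ≤ Real.exp 1 := by
      have := Real.add_one_le_exp (1:ℝ); linarith
    have hstep : ((n+1:ℕ):ℝ)^n ≤ Real.exp 1 * (n:ℝ)^n := by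
      rcases Nat.eq_zero_or_pos n with rfl | hn
      · simpa using he1
      · have hn' : (0:ℝ) < n := by exact_mod_cast hn
        have h1 : ((n+1:ℕ):ℝ) = (n:ℝ) * (1 + 1/(n:ℝ)) := by
          push_cast; field_simp
        rw [h1, mul_pow]
        have h2 : (1 + 1/(n:ℝ))^n ≤ Real.exp 1 := by
          have h3 : (1 + 1/(n:ℝ)) ≤ Real.exp (1/(n:ℝ)) := by
            have := Real.add_one_le_exp (1/(n:ℝ)); linarith
          calc (1 + 1/(n:ℝ))^n ≤ Real.exp (1/(n:ℝ)) ^ n := by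
                apply pow_le_pow_left₀ (by positivity) h3
            _ = Real.exp ((n:ℝ) * (1/(n:ℝ))) := by rw [Real.exp_nat_mul]
            _ = Real.exp 1 := by rw [mul_one_div, div_self (ne_of_gt hn')]
        calc (n:ℝ)^n * (1 + 1/(n:ℝ))^n ≤ (n:ℝ)^n * Real.exp 1 := by
              apply mul_le_mul_of_nonneg_left h2 (by positivity)
          _ = Real.exp 1 * (n:ℝ)^n := by ring
    calc ((n+1:ℕ):ℝ)^(n+1) = ((n+1:ℕ):ℝ)^n * ((n+1:ℕ):ℝ) := by rw [pow_succ]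
      _ ≤ (Real.exp 1 * (n:ℝ)^n) * ((n+1:ℕ):ℝ) := by
          apply mul_le_mul_of_nonneg_right hstep (by positivity)
      _ ≤ (Real.exp 1 * (Real.exp 1 ^ n * n.factorial)) * ((n+1:ℕ):ℝ) := by
          have := ih
          have h4 : (0:ℝ) ≤ Real.exp 1 := (Real.exp_pos 1).le
          apply mul_le_mul_of_nonneg_right _ (by positivity)
          exact mul_le_mul_of_nonneg_left ih h4
      _ = Real.exp 1 ^ (n+1) * ((n+1) * n.factorial : ℕ) := by push_cast; ring
      _ = Real.exp 1 ^ (n+1) * (n+1).factorial := by rw [Nat.factorial_succ]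

theorem Tdiff {N : ℕ} (A : Matrix (Fin N) (Fin N) ℂ) (b v : Fin N → ℂ)
    (f : (Fin N → ℂ) → ℂ) (hf : Differentiable ℂ f) :
    Differentiable ℂ (fun w => fderiv ℂ f (A.mulVec w + b) v) := by
  have h1 : Differentiable ℂ (fun w : Fin N → ℂ => A.mulVec w + b) := by
    apply Differentiable.add_const
    exact (Matrix.mulVecLin A).toContinuousLinearMap.differentiable
  exact (Dv_entire f hf v).comp h1

theorem keyB {N : ℕ} (A : Matrix (Fin N) (Fin N) ℂ) (b v : Fin N → ℂ) :
    ∀ (n : ℕ) (f : (Fin N → ℂ) → ℂ), Differentiable ℂ f → ∀ (w : Fin N → ℂ) (r : ℕ → ℝ),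
    (∀ i, 0 < r i) → ∀ M : ℝ,
    (∀ t : ℕ → ℂ, (∀ i, ‖t i‖ ≤ r i) →
       ‖f ((fun z => A.mulVec z + b)^[n] w + ∑ i ∈ Finset.range n, t i • (A ^ i).mulVec v)‖ ≤ M) →
    ‖((fun h : (Fin N → ℂ) → ℂ => fun w => fderiv ℂ h (A.mulVec w + b) v)^[n] f) w‖
      * ∏ i ∈ Finset.range n, r i ≤ M := by
  intro n
  induction n with
  | zero =>
    intro f hf w r hr M hM
    have := hM 0 (fun i => by simpa using (hr i).le)
    simpa using this
  | succ n ih =>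
    intro f hf w r hr M hM
    have hr0 : (0:ℝ) < r 0 := hr 0
    set T : ((Fin N → ℂ) → ℂ) → (Fin N → ℂ) → ℂ :=
      fun h : (Fin N → ℂ) → ℂ => fun w => fderiv ℂ h (A.mulVec w + b) v with hT
    set g := T f with hg
    have hgd : Differentiable ℂ g := Tdiff A b v f hf
    have step : ∀ t : ℕ → ℂ, (∀ i, ‖t i‖ ≤ r (i+1)) →
        ‖g ((fun z => A.mulVec z + b)^[n] w + ∑ i ∈ Finset.range n, t i • (A ^ i).mulVec v)‖
          ≤ M / r 0 := by
      intro t ht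
      set y := (fun z => A.mulVec z + b)^[n] w + ∑ i ∈ Finset.range n, t i • (A ^ i).mulVec v with hy
      have : g y = fderiv ℂ f (A.mulVec y + b) v := rfl
      rw [this]
      apply sliceCauchy f hf _ v hr0
      intro τ hτ
      -- the point
      have key : A.mulVec y + b + τ • v
          = (fun z => A.mulVec z + b)^[n+1] w
            + ∑ j ∈ Finset.range (n+1), (fun j => Nat.casesOn j τ t : ℕ → ℂ) j • (A ^ j).mulVec v := by
        have hAsum : A.mulVec (∑ i ∈ Finset.range n, t i • (A ^ i).mulVec v)
            = ∑ i ∈ Finset.range n, t i • (A ^ (i+1)).mulVec v := by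
          rw [show A.mulVec (∑ i ∈ Finset.range n, t i • (A ^ i).mulVec v)
              = A.mulVecLin (∑ i ∈ Finset.range n, t i • (A ^ i).mulVec v) from rfl]
          rw [map_sum]
          apply Finset.sum_congr rfl
          intro i _
          rw [_root_.map_smul]
          congr 1
          show A.mulVec ((A ^ i).mulVec v) = _
          rw [Matrix.mulVec_mulVec, ← pow_succ']
        have hit : (fun z => A.mulVec z + b)^[n+1] w
            = A.mulVec ((fun z => A.mulVec z + b)^[n] w) + b := by
          rw [Function.iterate_succ_apply']
        rw [Finset.sum_range_succ']
        simp only [hy, Matrix.mulVec_add, hit]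
        rw [hAsum]
        simp only [pow_zero, Matrix.one_mulVec]
        abel
      rw [key]
      apply hM
      intro j
      cases j with
      | zero => simpa using le_of_eq hτ
      | succ i => simpa using ht i
    have IH := ih g hgd w (fun i => r (i+1)) (fun i => hr (i+1)) (M / r 0) step
    have hTit : (T^[n+1] f) w = (T^[n] g) w := by
      rw [hg, ← Function.iterate_succ_apply]
    calc ‖(T^[n+1] f) w‖ * ∏ i ∈ Finset.range (n+1), r i
        = (‖(T^[n] g) w‖ * ∏ i ∈ Finset.range n, r (i+1)) * r 0 := by
          rw [hTit, Finset.prod_range_succ']; ring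
      _ ≤ (M / r 0) * r 0 := by
          apply mul_le_mul_of_nonneg_right IH hr0.le
      _ = M := div_mul_cancel₀ M (ne_of_gt hr0)

theorem stmt_12 {N : ℕ} (A : Matrix (Fin N) (Fin N) ℂ) (hA : IsUnit A.det)
    (v : Fin N → ℂ) (hv : v ≠ 0) (b z₀ : Fin N → ℂ) (hz₀ : A.mulVec z₀ + b = z₀)
    (hbdd : BddAbove (Set.range fun k : ℕ =>
      (k.factorial : ℝ) * ∏ i ∈ Finset.range k, ‖(A ^ i).mulVec v‖)) :
    ¬ ∃ f : (Fin N → ℂ) → ℂ, Differentiable ℂ f ∧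
      ∀ g : (Fin N → ℂ) → ℂ, Differentiable ℂ g →
        ∀ K : Set (Fin N → ℂ), IsCompact K → ∀ ε > 0,
          ∃ n : ℕ, ∀ z ∈ K,
            ‖(fun h : (Fin N → ℂ) → ℂ => fun w => fderiv ℂ h (A.mulVec w + b) v)^[n] f z
              - g z‖ < ε := by
  rintro ⟨f, hf, hyp⟩
  -- nonvanishing of the direction vectors
  have hu : ∀ i : ℕ, (A ^ i).mulVec v ≠ 0 := by
    intro i h0
    apply hv
    have hAi : IsUnit (A ^ i).det := by
      rw [Matrix.det_pow]; exact hA.pow i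
    have : Invertible (A ^ i) := Matrix.invertibleOfIsUnitDet _ hAi
    calc v = (1 : Matrix (Fin N) (Fin N) ℂ).mulVec v := (Matrix.one_mulVec v).symm
      _ = (⅟(A ^ i) * (A ^ i)).mulVec v := by rw [invOf_mul_self]
      _ = (⅟(A ^ i)).mulVec ((A ^ i).mulVec v) := by rw [← Matrix.mulVec_mulVec]
      _ = 0 := by rw [h0, Matrix.mulVec_zero]
  have hupos : ∀ i : ℕ, (0:ℝ) < ‖(A ^ i).mulVec v‖ := fun i => norm_pos_iff.2 (hu i)
  -- the uniform bound C
  obtain ⟨C, hC⟩ := hbdd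
  have hCk : ∀ k : ℕ, (k.factorial : ℝ) * ∏ i ∈ Finset.range k, ‖(A ^ i).mulVec v‖ ≤ C :=
    fun k => hC ⟨k, rfl⟩
  have hC1 : (1:ℝ) ≤ C := by simpa using hCk 0
  -- bound of f on the ball of radius 3
  obtain ⟨M, hM⟩ := (isCompact_closedBall z₀ 3).exists_bound_of_continuousOn
    hf.continuous.continuousOn
  have hM0 : (0:ℝ) ≤ M := le_trans (norm_nonneg _) (hM z₀ (mem_closedBall_self (by norm_num)))
  -- fixed point
  have hfix : ∀ n : ℕ, (fun z => A.mulVec z + b)^[n] z₀ = z₀ :=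
    Function.iterate_fixed hz₀
  -- uniform bound on the orbit
  have horb : ∀ n : ℕ,
      ‖((fun h : (Fin N → ℂ) → ℂ => fun w => fderiv ℂ h (A.mulVec w + b) v)^[n] f) z₀‖
        ≤ C * M := by
    intro n
    rcases Nat.eq_zero_or_pos n with rfl | hn
    · have : ‖f z₀‖ ≤ M := hM z₀ (mem_closedBall_self (by norm_num))
      calc ‖f z₀‖ ≤ M := this
        _ = 1 * M := (one_mul M).symm
        _ ≤ C * M := mul_le_mul_of_nonneg_right hC1 hM0
    · have hn' : (0:ℝ) < n := by exact_mod_cast hn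
      set u : ℕ → Fin N → ℂ := fun i => (A ^ i).mulVec v with hudef
      set r : ℕ → ℝ := fun i => 3 / (n * ‖u i‖) with hrdef
      have hr : ∀ i, 0 < r i := fun i => by
        have := hupos i
        simp only [hrdef]
        positivity
      have hpoly : ∀ t : ℕ → ℂ, (∀ i, ‖t i‖ ≤ r i) →
          ‖f ((fun z => A.mulVec z + b)^[n] z₀ + ∑ i ∈ Finset.range n, t i • u i)‖ ≤ M := by
        intro t ht
        apply hM
        rw [hfix n]
        simp only [mem_closedBall, dist_self_add_left]
        calc ‖∑ i ∈ Finset.range n, t i • u i‖ ≤ ∑ i ∈ Finset.range n, ‖t i • u i‖ :=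
              norm_sum_le _ _
          _ ≤ ∑ i ∈ Finset.range n, 3 / (n:ℝ) := by
              apply Finset.sum_le_sum
              intro i _
              rw [norm_smul]
              calc ‖t i‖ * ‖u i‖ ≤ r i * ‖u i‖ :=
                    mul_le_mul_of_nonneg_right (ht i) (norm_nonneg _)
                _ = 3 / (n:ℝ) := by
                    have h1 : ((n:ℝ)) ≠ 0 := ne_of_gt hn'
                    have h2 : ‖u i‖ ≠ 0 := by simpa [hudef] using (hupos i).ne'
                    simp only [hrdef]
                    field_simp
          _ = 3 := by
              rw [Finset.sum_const, Finset.card_range, nsmul_eq_mul]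
              field_simp
      have key := keyB A b v n f hf z₀ r hr M hpoly
      -- compute the product of radii
      have hprod : ∏ i ∈ Finset.range n, r i
          = 3^n / ((n:ℝ)^n * ∏ i ∈ Finset.range n, ‖u i‖) := by
        simp only [hrdef]
        rw [Finset.prod_div_distrib, Finset.prod_const, Finset.card_range,
          Finset.prod_mul_distrib, Finset.prod_const, Finset.card_range]
      set P := ∏ i ∈ Finset.range n, ‖u i‖ with hP
      have hPpos : 0 < P := Finset.prod_pos fun i _ => hupos i
      have hrpos : 0 < ∏ i ∈ Finset.range n, r i := Finset.prod_pos fun i _ => hr i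
      set X := ‖((fun h : (Fin N → ℂ) → ℂ => fun w => fderiv ℂ h (A.mulVec w + b) v)^[n] f) z₀‖
      have hX : X ≤ M * ((n:ℝ)^n * P) / 3^n := by
        rw [hprod] at key
        have h3 : (0:ℝ) < 3^n := by positivity
        have hnp : (0:ℝ) < (n:ℝ)^n * P := by positivity
        rw [le_div_iff₀ h3]
        calc X * 3^n = (X * (3^n/((n:ℝ)^n*P))) * ((n:ℝ)^n*P) := by field_simp
          _ ≤ M * ((n:ℝ)^n*P) := mul_le_mul_of_nonneg_right key hnp.le
      have hPC : P ≤ C / n.factorial := by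
        rw [le_div_iff₀ (by positivity : (0:ℝ) < (n.factorial:ℝ))]
        calc P * n.factorial = (n.factorial : ℝ) * P := by ring
          _ ≤ C := hCk n
      have he3 : Real.exp 1 ≤ 3 := by
        have := Real.exp_one_lt_d9
        linarith
      calc X ≤ M * ((n:ℝ)^n * P) / 3^n := hX
        _ ≤ M * ((n:ℝ)^n * (C / n.factorial)) / 3^n := by gcongr
        _ = M * C * ((n:ℝ)^n / ((n.factorial : ℝ) * 3^n)) := by
            field_simp
        _ ≤ M * C * (Real.exp 1 ^ n * n.factorial / ((n.factorial : ℝ) * 3^n)) := by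
            gcongr
            exact powSelfLe n
        _ = M * C * ((Real.exp 1 / 3)^n) := by
            rw [div_pow]
            have hfac : (0:ℝ) < (n.factorial : ℝ) := by positivity
            field_simp
        _ ≤ M * C * 1 := by
            apply mul_le_mul_of_nonneg_left _ (by positivity)
            apply pow_le_one₀ (by positivity)
            rw [div_le_one (by norm_num : (0:ℝ) < 3)]
            exact he3
        _ = C * M := by ring
  -- derive contradiction
  obtain ⟨n, hnn⟩ := hyp (fun _ => ((C * M + 2 : ℝ) : ℂ)) (differentiable_const _)
    {z₀} isCompact_singleton 1 one_pos
  have h1 := hnn z₀ rfl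
  have h2 := horb n
  set Y := ((fun h : (Fin N → ℂ) → ℂ => fun w => fderiv ℂ h (A.mulVec w + b) v)^[n] f) z₀ with hY
  have h3 : ‖((C * M + 2 : ℝ) : ℂ)‖ ≤ ‖Y - ((C * M + 2 : ℝ) : ℂ)‖ + ‖Y‖ := by
    have := norm_sub_le (Y - ((C * M + 2 : ℝ) : ℂ)) Y
    calc ‖((C * M + 2 : ℝ) : ℂ)‖ = ‖-(Y - ((C * M + 2 : ℝ) : ℂ) - Y)‖ := by ring_nf
      _ = ‖Y - ((C * M + 2 : ℝ) : ℂ) - Y‖ := norm_neg _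
      _ ≤ _ := norm_sub_le _ _
  have h4 : ‖((C * M + 2 : ℝ) : ℂ)‖ = C * M + 2 := by
    have hCM : (0:ℝ) ≤ C * M := mul_nonneg (by linarith) hM0
    rw [Complex.norm_real, Real.norm_of_nonneg (by linarith)]
  rw [h4] at h3
  have h5 : C * M + 2 < 1 + (C * M) := by
    calc C * M + 2 ≤ ‖Y - ((C * M + 2 : ℝ) : ℂ)‖ + ‖Y‖ := h3
      _ < 1 + C * M := by
          apply add_lt_add_of_lt_of_le h1 h2
  linarith
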